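/- Every second-countable π-space has a Lusin π-base. -/

import Mathlib

open Set Topology

namespace PiSpacePaper

/-- The restriction `p↾n` of `p : ℕ → ℕ`, as a list of length `n`. -/
def restrictSeq (p : ℕ → ℕ) (n : ℕ) : List ℕ := (List.range n).map p

/-- The basic clopen set `S_a` of the Baire space. -/
def cyl (a : List ℕ) : Set (ℕ → ℕ) := {p | restrictSeq p a.length = a}

/-- The fruit `⋂ n, V (p↾n)` of a branch `p` in a Souslin scheme `V`. -/
def fruit {X : Type*} (V : List ℕ → Set X) (p : ℕ → ℕ) : Set X :=
  ⋂ n : ℕ, V (restrictSeq p n)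

/-- A Souslin scheme `V` covers the set `s`. -/
def Covers {X : Type*} (V : List ℕ → Set X) (s : Set X) : Prop :=
  V [] = s ∧ ∀ a : List ℕ, V a = ⋃ n : ℕ, V (a ++ [n])

/-- A Souslin scheme `V` partitions the set `s`. -/
def Partitions {X : Type*} (V : List ℕ → Set X) (s : Set X) : Prop :=
  Covers V s ∧ ∀ (a : List ℕ) (n m : ℕ), n ≠ m → V (a ++ [n]) ∩ V (a ++ [m]) = ∅

/-- A Souslin scheme is complete iff all fruits are nonempty. -/
def Complete {X : Type*} (V : List ℕ → Set X) : Prop :=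
  ∀ p : ℕ → ℕ, (fruit V p).Nonempty

/-- A Souslin scheme has strict branches iff every fruit is a singleton. -/
def StrictBranches {X : Type*} (V : List ℕ → Set X) : Prop :=
  ∀ p : ℕ → ℕ, ∃ x : X, fruit V p = {x}

/-- A Souslin scheme is open iff all its members are open sets. -/
def OpenScheme {X : Type*} [TopologicalSpace X] (V : List ℕ → Set X) : Prop :=
  ∀ a : List ℕ, IsOpen (V a)

/-- `flesh V = ⋃ a, V a`. -/
def flesh {X : Type*} (V : List ℕ → Set X) : Set X := ⋃ a : List ℕ, V a

/-- `branches V x = {q ∈ ℕ^ℕ : x ∈ fruit V q}`. -/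
def branches {X : Type*} (V : List ℕ → Set X) (x : X) : Set (ℕ → ℕ) :=
  {q | x ∈ fruit V q}

/-- A family `γ` of subsets is a π-net for a space: all members are nonempty and every
nonempty open set contains a member. -/
def IsPiNet {X : Type*} [TopologicalSpace X] (γ : Set (Set X)) : Prop :=
  (∀ G ∈ γ, G.Nonempty) ∧
  ∀ U : Set X, IsOpen U → U.Nonempty → ∃ G ∈ γ, G ⊆ U

/-- A family `γ` of subsets is a π-base for a space: all members are nonempty open sets
and every nonempty open set contains a member. -/
def IsPiBase {X : Type*} [TopologicalSpace X] (γ : Set (Set X)) : Prop :=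
  (∀ G ∈ γ, IsOpen G ∧ G.Nonempty) ∧
  ∀ U : Set X, IsOpen U → U.Nonempty → ∃ G ∈ γ, G ⊆ U

/-- A π-space: there is an open Souslin scheme that partitions the space, has strict
branches, and whose family of members is a π-base. -/
def IsPiSpace (X : Type*) [TopologicalSpace X] : Prop :=
  ∃ V : List ℕ → Set X, OpenScheme V ∧ Partitions V Set.univ ∧ StrictBranches V ∧
    IsPiBase {S : Set X | ∃ a : List ℕ, S = V a}

/-- A Lusin π-base for a space. -/
def IsLusinPiBase {X : Type*} [TopologicalSpace X] (V : List ℕ → Set X) : Prop :=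
  OpenScheme V ∧ Partitions V Set.univ ∧ StrictBranches V ∧
  ∀ (x : X) (U : Set X), IsOpen U → x ∈ U →
    ∃ (a : List ℕ) (n : ℕ), x ∈ V a ∧ (⋃ i : ℕ, ⋃ _ : n ≤ i, V (a ++ [i])) ⊆ U

/-- A map is quasi-open iff the image of every nonempty open set has nonempty interior. -/
def IsQuasiOpen {X Y : Type*} [TopologicalSpace X] [TopologicalSpace Y] (f : X → Y) : Prop :=
  ∀ U : Set X, IsOpen U → U.Nonempty → (interior (f '' U)).Nonempty

/-- A π-net Souslin scheme on a space `X`: for every finite sequence `a`, the family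
`{V b : b ⊒ a}` is a π-net for the subspace `V a` of `X` (whose nonempty open sets are
exactly the nonempty sets `U ∩ V a` with `U` open in `X`). -/
def IsPiNetScheme {X : Type*} [TopologicalSpace X] (V : List ℕ → Set X) : Prop :=
  ∀ a : List ℕ,
    (∀ b : List ℕ, a <+: b → (V b).Nonempty) ∧
    ∀ U : Set X, IsOpen U → (U ∩ V a).Nonempty → ∃ b : List ℕ, a <+: b ∧ V b ⊆ U ∩ V a

/-- A π-base Souslin scheme on a space is an open π-net Souslin scheme. -/
def IsPiBaseScheme {X : Type*} [TopologicalSpace X] (V : List ℕ → Set X) : Prop :=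
  OpenScheme V ∧ IsPiNetScheme V

/-- A selector on a Souslin scheme `V`: a surjection of the Baire space onto `flesh V`
such that every fiber `f⁻¹(x)` is a dense subset of the subspace `branches V x` of the
Baire space. -/
def IsSelector {X : Type*} (V : List ℕ → Set X) (f : (ℕ → ℕ) → X) : Prop :=
  Set.range f = flesh V ∧
  ∀ x ∈ flesh V, f ⁻¹' {x} ⊆ branches V x ∧ branches V x ⊆ closure (f ⁻¹' {x})

/-- The topology `σ_{τ,f}` on the Baire space, generated by the subbase consisting of the
`τ`-preimages under `f` together with the basic sets `S_a`. -/
def sigmaTop {X : Type*} [TopologicalSpace X] (f : (ℕ → ℕ) → X) :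
    TopologicalSpace (ℕ → ℕ) :=
  TopologicalSpace.generateFrom
    ({S : Set (ℕ → ℕ) | ∃ U : Set X, IsOpen U ∧ S = f ⁻¹' U} ∪
      {S : Set (ℕ → ℕ) | ∃ a : List ℕ, S = cyl a})

/-- The Souslin scheme `V^g`, where `V^g_a = V_{g ∘ a}`. -/
def schemeComp {X : Type*} (V : List ℕ → Set X) (g : ℕ → ℕ) : List ℕ → Set X :=
  fun a => V (a.map g)

/-- A subset of the Baire space is dense-in-itself iff it has no isolated points. -/
def DenseInItself (B : Set (ℕ → ℕ)) : Prop :=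
  ∀ q ∈ B, q ∈ closure (B \ {q})

/-- `X` is a continuous open image of a π-space. -/
def IsContinuousOpenImageOfPiSpace (X : Type) [TopologicalSpace X] : Prop :=
  ∃ (Y : Type) (_ : TopologicalSpace Y) (f : Y → X),
    IsPiSpace Y ∧ Continuous f ∧ IsOpenMap f ∧ Function.Surjective f

/-- The topology `τ_N` on the Baire space generated by the sets `U \ A` with `U` open in
the Baire space and `A` nowhere dense in the Baire space. -/
def tauN : TopologicalSpace (ℕ → ℕ) :=
  TopologicalSpace.generateFrom
    {S : Set (ℕ → ℕ) | ∃ U A : Set (ℕ → ℕ), IsOpen U ∧ IsNowhereDense A ∧ S = U \ A}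

set_option maxHeartbeats 1000000
lemma restrictSeq_succ (p : ℕ → ℕ) (n : ℕ) :
    restrictSeq p (n+1) = restrictSeq p n ++ [p n] := by
  simp [restrictSeq, List.range_succ]

lemma restrictSeq_length (p : ℕ → ℕ) (n : ℕ) : (restrictSeq p n).length = n := by
  simp [restrictSeq]

lemma restrictSeq_getD (p : ℕ → ℕ) (n i : ℕ) (hi : i < n) :
    (restrictSeq p n).getD i 0 = p i := by
  simp [restrictSeq, List.getD, List.getElem?_map, hi]

-- prefix helpers
example (l1 l2 : List ℕ) (h : l1 <+: l2) (h2 : l1.length = l2.length) : l1 = l2 :=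
  List.IsPrefix.eq_of_length h h2

lemma getD_of_prefix {l1 l2 : List ℕ} (h : l1 <+: l2) {i : ℕ} (hi : i < l1.length) :
    l2.getD i 0 = l1.getD i 0 := by
  obtain ⟨t, rfl⟩ := h
  rw [List.getD_append _ _ _ _ hi]

lemma prefix_concat_getD {b c : List ℕ} (h : b <+: c) (hl : b.length < c.length) :
    b ++ [c.getD b.length 0] <+: c := by
  obtain ⟨t, rfl⟩ := h
  cases t with
  | nil => simp at hl
  | cons m t' =>
    have : (b ++ m :: t').getD b.length 0 = m := by
      rw [List.getD_append_right _ _ _ _ (le_refl _)]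
      simp
    rw [this]
    exact ⟨t', by simp⟩

lemma prefix_take_of_prefix {l L : List ℕ} (h : l <+: L) {j : ℕ} (hj : l.length ≤ j) :
    l <+: L.take j := by
  obtain ⟨t, rfl⟩ := h
  rw [List.take_append, List.take_of_length_le hj]
  exact ⟨_, rfl⟩

def skipIdx (t i : ℕ) : ℕ := if i < t then i else i + 1

lemma skipIdx_ne (t i : ℕ) : skipIdx t i ≠ t := by
  unfold skipIdx; split <;> omega

lemma skipIdx_inj (t : ℕ) {i j : ℕ} (h : skipIdx t i = skipIdx t j) : i = j := by
  unfold skipIdx at h; split at h <;> split at h <;> omega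

lemma skipIdx_surj (t m : ℕ) (h : m ≠ t) : ∃ i, skipIdx t i = m := by
  by_cases hm : m < t
  · exact ⟨m, by unfold skipIdx; split <;> omega⟩
  · exact ⟨m - 1, by unfold skipIdx; split <;> omega⟩


section Scheme
variable {X : Type} (V : List ℕ → Set X)

lemma mono_of_cover (hcov : ∀ a : List ℕ, V a = ⋃ n : ℕ, V (a ++ [n])) :
    ∀ t a : List ℕ, V (a ++ t) ⊆ V a := by
  intro t
  induction t using List.reverseRecOn with
  | nil => simp
  | append_singleton t n ih =>
    intro a x hx
    apply ih
    rw [hcov (a ++ t)]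
    rw [← List.append_assoc] at hx
    exact mem_iUnion.2 ⟨n, hx⟩

lemma mono_of_prefix (hcov : ∀ a : List ℕ, V a = ⋃ n : ℕ, V (a ++ [n]))
    {a b : List ℕ} (h : a <+: b) : V b ⊆ V a := by
  obtain ⟨t, rfl⟩ := h
  exact mono_of_cover V hcov t a

lemma eq_of_same_length (hcov : ∀ a : List ℕ, V a = ⋃ n : ℕ, V (a ++ [n]))
    (hdis : ∀ (a : List ℕ) (n m : ℕ), n ≠ m → V (a ++ [n]) ∩ V (a ++ [m]) = ∅) :
    ∀ a b : List ℕ, a.length = b.length → (V a ∩ V b).Nonempty → a = b := by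
  intro a
  induction a using List.reverseRecOn with
  | nil => intro b hl _; exact (List.length_eq_zero_iff.1 hl.symm).symm
  | append_singleton a n ih =>
    intro b hl hne
    induction b using List.reverseRecOn with
    | nil => simp at hl
    | append_singleton b m _ =>
      simp only [List.length_append, List.length_singleton] at hl
      obtain ⟨x, hx1, hx2⟩ := hne
      have hab : a = b := by
        refine ih b (by omega) ⟨x, ?_, ?_⟩
        · exact mono_of_prefix V hcov ⟨[n], rfl⟩ hx1
        · exact mono_of_prefix V hcov ⟨[m], rfl⟩ hx2
      subst hab
      by_cases hnm : n = m
      · rw [hnm]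
      · have : x ∈ V (a ++ [n]) ∩ V (a ++ [m]) := ⟨hx1, hx2⟩
        rw [hdis a n m hnm] at this
        exact absurd this (notMem_empty x)

lemma comparable_of_inter (hcov : ∀ a : List ℕ, V a = ⋃ n : ℕ, V (a ++ [n]))
    (hdis : ∀ (a : List ℕ) (n m : ℕ), n ≠ m → V (a ++ [n]) ∩ V (a ++ [m]) = ∅)
    {a b : List ℕ} (h : (V a ∩ V b).Nonempty) : a <+: b ∨ b <+: a := by
  rcases le_total a.length b.length with hl | hl
  · left
    have htake : a = b.take a.length := by
      refine eq_of_same_length V hcov hdis a (b.take a.length) (by simp [hl]) ?_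
      obtain ⟨x, hx1, hx2⟩ := h
      exact ⟨x, hx1, mono_of_prefix V hcov (List.take_prefix _ _) hx2⟩
    rw [htake]; exact List.take_prefix _ _
  · right
    have htake : b = a.take b.length := by
      refine eq_of_same_length V hcov hdis b (a.take b.length) (by simp [hl]) ?_
      obtain ⟨x, hx1, hx2⟩ := h
      exact ⟨x, hx2, mono_of_prefix V hcov (List.take_prefix _ _) hx1⟩
    rw [htake]; exact List.take_prefix _ _


lemma restrictSeq_self (a : List ℕ) : restrictSeq (fun n => a.getD n 0) a.length = a := by
  apply List.ext_getElem (by simp [restrictSeq])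
  intro i h1 h2
  simp [restrictSeq, List.getD_eq_getElem, List.getElem?_eq_getElem h2]

lemma nonempty_of_strict (hstr : StrictBranches V) (a : List ℕ) : (V a).Nonempty := by
  obtain ⟨x, hx⟩ := hstr (fun n => a.getD n 0)
  refine ⟨x, ?_⟩
  have : x ∈ fruit V (fun n => a.getD n 0) := by rw [hx]; rfl
  have := mem_iInter.1 this a.length
  rwa [restrictSeq_self] at this

variable [TopologicalSpace X] in
lemma pinet_of_pibase (hcov : ∀ a : List ℕ, V a = ⋃ n : ℕ, V (a ++ [n]))
    (hdis : ∀ (a : List ℕ) (n m : ℕ), n ≠ m → V (a ++ [n]) ∩ V (a ++ [m]) = ∅)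
    (hne : ∀ a, (V a).Nonempty)
    (hopen : ∀ a, IsOpen (V a))
    (hbase : ∀ U : Set X, IsOpen U → U.Nonempty → ∃ G ∈ {S : Set X | ∃ a : List ℕ, S = V a}, G ⊆ U)
    {b : List ℕ} {U : Set X} (hU : IsOpen U) (h : (U ∩ V b).Nonempty) :
    ∃ c, b <+: c ∧ V c ⊆ U ∩ V b := by
  obtain ⟨G, ⟨c', rfl⟩, hsub⟩ := hbase (U ∩ V b) (hU.inter (hopen b)) h
  have hcmp : c' <+: b ∨ b <+: c' := by
    rcases comparable_of_inter V hcov hdis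
      (a := c') (b := b) ⟨(hne c').some, (hne c').some_mem,
        (hsub (hne c').some_mem).2⟩ with h1 | h1
    · exact Or.inl h1
    · exact Or.inr h1
  rcases hcmp with h1 | h1
  · exact ⟨b, List.prefix_refl b, fun x hx =>
      hsub (mono_of_prefix V hcov h1 hx)⟩
  · exact ⟨c', h1, hsub⟩

end Scheme

inductive St where
  | single (b : List ℕ) (k : ℕ)
  | union (b c : List ℕ) (k : ℕ)

def St.task : St → ℕ
  | .single _ k => k
  | .union _ _ k => k

def St.va : St → List ℕ
  | .single b _ => b
  | .union b _ _ => b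

def St.rank : St → ℕ
  | .single _ _ => 0
  | .union b c _ => c.length - b.length

def St.IsSingle : St → Prop
  | .single _ _ => True
  | .union _ _ _ => False

def StInv : St → Prop
  | .single _ _ => True
  | .union b c _ => b <+: c ∧ b.length < c.length

def stSet {X : Type} (V : List ℕ → Set X) : St → Set X
  | .single b _ => V b
  | .union b c _ => V b \ V c

def stepSt (pick : List ℕ → ℕ → List ℕ) : St → ℕ → St
  | .single b k, i =>
      if pick b k = b then .single (b ++ [i]) (k+1)
      else if i = 0 then .union b (pick b k) (k+1)
      else .single (pick b k ++ [i-1]) (k+1)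
  | .union b c k, i =>
      if b.length + 1 = c.length then .single (b ++ [skipIdx (c.getD b.length 0) i]) k
      else if i = 0 then .union (b ++ [c.getD b.length 0]) c k
      else .single (b ++ [skipIdx (c.getD b.length 0) (i-1)]) k

def stateSt (pick : List ℕ → ℕ → List ℕ) (a : List ℕ) : St :=
  a.foldl (stepSt pick) (.single [] 0)

lemma stateSt_append (pick : List ℕ → ℕ → List ℕ) (a : List ℕ) (i : ℕ) :
    stateSt pick (a ++ [i]) = stepSt pick (stateSt pick a) i := by
  simp [stateSt]

section Step
variable {X : Type} (V : List ℕ → Set X) (pick : List ℕ → ℕ → List ℕ)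
variable (hpick : ∀ b k, b <+: pick b k)
variable (hcov : ∀ a : List ℕ, V a = ⋃ n : ℕ, V (a ++ [n]))
variable (hdis : ∀ (a : List ℕ) (n m : ℕ), n ≠ m → V (a ++ [n]) ∩ V (a ++ [m]) = ∅)

include hpick in
lemma StInv_step {s : St} (hs : StInv s) (i : ℕ) : StInv (stepSt pick s i) := by
  cases s with
  | single b k =>
    by_cases hc : pick b k = b
    · simp only [stepSt, if_pos hc]; trivial
    · by_cases hi : i = 0
      · simp only [stepSt, if_neg hc, if_pos hi]
        refine ⟨hpick b k, ?_⟩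
        have h1 := (hpick b k).length_le
        have h2 : b.length ≠ (pick b k).length := fun hh =>
          hc (((hpick b k).eq_of_length hh).symm)
        omega
      · simp only [stepSt, if_neg hc, if_neg hi]; trivial
  | union b c k =>
    obtain ⟨hpre, hlen⟩ := hs
    simp only [stepSt]
    split
    · trivial
    · split
      · refine ⟨prefix_concat_getD hpre hlen, ?_⟩
        have := (prefix_concat_getD hpre hlen).length_le
        simp only [List.length_append, List.length_singleton] at this ⊢
        omega
      · trivial

-- disjointness from V c of off-path siblings
include hcov hdis in
lemma offpath_disj {b c : List ℕ} (hpre : b <+: c) (hlen : b.length < c.length)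
    {m : ℕ} (hm : m ≠ c.getD b.length 0) : V (b ++ [m]) ∩ V c = ∅ := by
  have h1 : V c ⊆ V (b ++ [c.getD b.length 0]) :=
    mono_of_prefix V hcov (prefix_concat_getD hpre hlen)
  have h2 := hdis b m (c.getD b.length 0) hm
  apply eq_empty_of_subset_empty
  rw [← h2]
  exact fun x hx => ⟨hx.1, h1 hx.2⟩

include hcov hdis in
lemma diff_base {b c : List ℕ} (hpre : b <+: c) (hlen : b.length + 1 = c.length) :
    V b \ V c = ⋃ i : ℕ, V (b ++ [skipIdx (c.getD b.length 0) i]) := by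
  set t := c.getD b.length 0 with ht
  have hc : c = b ++ [t] :=
    ((prefix_concat_getD hpre (by omega)).eq_of_length (by simp; omega)).symm
  ext x
  simp only [mem_diff, mem_iUnion]
  constructor
  · rintro ⟨hxb, hxc⟩
    rw [hcov b] at hxb
    obtain ⟨m, hm⟩ := mem_iUnion.1 hxb
    have hmne : m ≠ t := by
      rintro rfl; exact hxc (by rw [hc]; exact hm)
    obtain ⟨i, hi⟩ := skipIdx_surj _ m hmne
    exact ⟨i, by rw [hi]; exact hm⟩
  · rintro ⟨i, hi⟩
    refine ⟨mono_of_prefix V hcov ⟨[skipIdx t i], rfl⟩ hi, fun hxc => ?_⟩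
    have hdd := offpath_disj V hcov hdis hpre (by omega) (skipIdx_ne t i)
    have hmem : x ∈ V (b ++ [skipIdx t i]) ∩ V c := ⟨hi, hxc⟩
    rw [hdd] at hmem
    exact absurd hmem (notMem_empty x)

include hcov hdis in
lemma diff_rec {b c : List ℕ} (hpre : b <+: c) (hlen : b.length + 1 < c.length) :
    V b \ V c = (V (b ++ [c.getD b.length 0]) \ V c) ∪
      ⋃ i : ℕ, V (b ++ [skipIdx (c.getD b.length 0) i]) := by
  ext x
  simp only [mem_diff, mem_union, mem_iUnion]
  constructor
  · rintro ⟨hxb, hxc⟩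
    rw [hcov b] at hxb
    obtain ⟨m, hm⟩ := mem_iUnion.1 hxb
    by_cases hmne : m = c.getD b.length 0
    · exact Or.inl ⟨by rw [← hmne]; exact hm, hxc⟩
    · obtain ⟨i, hi⟩ := skipIdx_surj _ m hmne
      exact Or.inr ⟨i, by rw [hi]; exact hm⟩
  · rintro (⟨hx1, hx2⟩ | ⟨i, hi⟩)
    · exact ⟨mono_of_prefix V hcov ⟨_, rfl⟩ hx1, hx2⟩
    · refine ⟨mono_of_prefix V hcov ⟨_, rfl⟩ hi, fun hxc => ?_⟩
      have hdd := offpath_disj V hcov hdis hpre (by omega) (skipIdx_ne _ i)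
      have hmem : x ∈ V (b ++ [skipIdx (c.getD b.length 0) i]) ∩ V c := ⟨hi, hxc⟩
      rw [hdd] at hmem
      exact absurd hmem (notMem_empty x)


include hpick hcov hdis in
lemma stSet_cover {s : St} (hs : StInv s) :
    stSet V s = ⋃ i : ℕ, stSet V (stepSt pick s i) := by
  cases s with
  | single b k =>
    by_cases hc : pick b k = b
    · simp only [stepSt, if_pos hc, stSet]
      exact hcov b
    · ext x
      simp only [stSet, mem_iUnion]
      constructor
      · intro hxb
        by_cases hxp : x ∈ V (pick b k)
        · rw [hcov (pick b k)] at hxp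
          obtain ⟨m, hm⟩ := mem_iUnion.1 hxp
          refine ⟨m + 1, ?_⟩
          simp only [stepSt, if_neg hc, if_neg (Nat.succ_ne_zero m)]
          simpa using hm
        · refine ⟨0, ?_⟩
          simp only [stepSt, if_neg hc, if_pos rfl]
          exact ⟨hxb, hxp⟩
      · rintro ⟨i, hi⟩
        match i with
        | 0 =>
          simp only [stepSt, if_neg hc, if_pos rfl] at hi
          exact hi.1
        | m + 1 =>
          simp only [stepSt, if_neg hc, if_neg (Nat.succ_ne_zero m)] at hi
          have : b <+: pick b k ++ [m + 1 - 1] := (hpick b k).trans ⟨_, rfl⟩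
          exact mono_of_prefix V hcov this hi
  | union b c k =>
    obtain ⟨hpre, hlen⟩ := hs
    by_cases hb : b.length + 1 = c.length
    · simp only [stepSt, if_pos hb, stSet]
      exact diff_base V hcov hdis hpre hb
    · have hlen2 : b.length + 1 < c.length := by omega
      rw [stSet, diff_rec V hcov hdis hpre hlen2]
      ext x
      simp only [mem_union, mem_iUnion]
      constructor
      · rintro (hx | ⟨j, hj⟩)
        · refine ⟨0, ?_⟩
          simp only [stepSt, if_neg hb, if_pos rfl]
          exact hx
        · refine ⟨j + 1, ?_⟩
          simp only [stepSt, if_neg hb, if_neg (Nat.succ_ne_zero j)]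
          simpa [stSet] using hj
      · rintro ⟨i, hi⟩
        match i with
        | 0 =>
          simp only [stepSt, if_neg hb, if_pos rfl] at hi
          exact Or.inl hi
        | m + 1 =>
          simp only [stepSt, if_neg hb, if_neg (Nat.succ_ne_zero m)] at hi
          exact Or.inr ⟨m, by simpa [stSet] using hi⟩

include hpick hcov hdis in
lemma stSet_step_subset {s : St} (hs : StInv s) (i : ℕ) :
    stSet V (stepSt pick s i) ⊆ stSet V s := by
  rw [stSet_cover V pick hpick hcov hdis hs]
  exact subset_iUnion (fun i => stSet V (stepSt pick s i)) i

include hpick hcov hdis in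
lemma stSet_disj {s : St} (hs : StInv s) {i j : ℕ} (hij : i ≠ j) :
    stSet V (stepSt pick s i) ∩ stSet V (stepSt pick s j) = ∅ := by
  apply eq_empty_iff_forall_notMem.2
  rintro x ⟨hxi, hxj⟩
  cases s with
  | single b k =>
    by_cases hc : pick b k = b
    · simp only [stepSt, if_pos hc, stSet] at hxi hxj
      have hmem : x ∈ V (b ++ [i]) ∩ V (b ++ [j]) := ⟨hxi, hxj⟩
      rw [hdis b i j hij] at hmem
      exact absurd hmem (notMem_empty x)
    · match i, j with
      | 0, 0 => exact hij rfl
      | 0, m + 1 =>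
        simp only [stepSt, if_neg hc, if_pos rfl, if_neg (Nat.succ_ne_zero m), stSet]
          at hxi hxj
        exact hxi.2 (mono_of_prefix V hcov ⟨_, rfl⟩ hxj)
      | m + 1, 0 =>
        simp only [stepSt, if_neg hc, if_pos rfl, if_neg (Nat.succ_ne_zero m), stSet]
          at hxi hxj
        exact hxj.2 (mono_of_prefix V hcov ⟨_, rfl⟩ hxi)
      | m + 1, l + 1 =>
        simp only [stepSt, if_neg hc, if_neg (Nat.succ_ne_zero m),
          if_neg (Nat.succ_ne_zero l), stSet] at hxi hxj
        have hml : m + 1 - 1 ≠ l + 1 - 1 := by omega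
        have := hdis (pick b k) _ _ hml
        have hmem : x ∈ V (pick b k ++ [m + 1 - 1]) ∩ V (pick b k ++ [l + 1 - 1]) :=
          ⟨hxi, hxj⟩
        rw [this] at hmem
        exact absurd hmem (notMem_empty x)
  | union b c k =>
    obtain ⟨hpre, hlen⟩ := hs
    by_cases hb : b.length + 1 = c.length
    · simp only [stepSt, if_pos hb, stSet] at hxi hxj
      have hne : skipIdx (c.getD b.length 0) i ≠ skipIdx (c.getD b.length 0) j :=
        fun hh => hij (skipIdx_inj _ hh)
      have := hdis b _ _ hne
      have hmem : x ∈ V (b ++ [skipIdx (c.getD b.length 0) i]) ∩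
          V (b ++ [skipIdx (c.getD b.length 0) j]) := ⟨hxi, hxj⟩
      rw [this] at hmem
      exact absurd hmem (notMem_empty x)
    · match i, j with
      | 0, 0 => exact hij rfl
      | 0, m + 1 =>
        simp only [stepSt, if_neg hb, if_pos rfl, if_neg (Nat.succ_ne_zero m), stSet]
          at hxi hxj
        have := hdis b (c.getD b.length 0) (skipIdx (c.getD b.length 0) (m + 1 - 1))
          (Ne.symm (skipIdx_ne _ _))
        have hmem : x ∈ V (b ++ [c.getD b.length 0]) ∩
            V (b ++ [skipIdx (c.getD b.length 0) (m + 1 - 1)]) := ⟨hxi.1, hxj⟩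
        rw [this] at hmem
        exact absurd hmem (notMem_empty x)
      | m + 1, 0 =>
        simp only [stepSt, if_neg hb, if_pos rfl, if_neg (Nat.succ_ne_zero m), stSet]
          at hxi hxj
        have := hdis b (c.getD b.length 0) (skipIdx (c.getD b.length 0) (m + 1 - 1))
          (Ne.symm (skipIdx_ne _ _))
        have hmem : x ∈ V (b ++ [c.getD b.length 0]) ∩
            V (b ++ [skipIdx (c.getD b.length 0) (m + 1 - 1)]) := ⟨hxj.1, hxi⟩
        rw [this] at hmem
        exact absurd hmem (notMem_empty x)
      | m + 1, l + 1 =>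
        simp only [stepSt, if_neg hb, if_neg (Nat.succ_ne_zero m),
          if_neg (Nat.succ_ne_zero l), stSet] at hxi hxj
        have hne : skipIdx (c.getD b.length 0) (m + 1 - 1) ≠
            skipIdx (c.getD b.length 0) (l + 1 - 1) := by
          intro hh
          have := skipIdx_inj _ hh
          omega
        have := hdis b _ _ hne
        have hmem : x ∈ V (b ++ [skipIdx (c.getD b.length 0) (m + 1 - 1)]) ∩
            V (b ++ [skipIdx (c.getD b.length 0) (l + 1 - 1)]) := ⟨hxi, hxj⟩
        rw [this] at hmem
        exact absurd hmem (notMem_empty x)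

include hcov hdis in
lemma isOpen_diff [TopologicalSpace X] (hopen : ∀ a, IsOpen (V a)) :
    ∀ (d : ℕ) (b c : List ℕ), b <+: c → b.length + 1 + d = c.length →
      IsOpen (V b \ V c) := by
  intro d
  induction d with
  | zero =>
    intro b c hpre hlen
    rw [diff_base V hcov hdis hpre (by omega)]
    exact isOpen_iUnion (fun i => hopen _)
  | succ d ih =>
    intro b c hpre hlen
    rw [diff_rec V hcov hdis hpre (by omega)]
    exact (ih _ c (prefix_concat_getD hpre (by omega)) (by simp; omega)).union
      (isOpen_iUnion (fun i => hopen _))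

include hcov hdis in
lemma isOpen_stSet [TopologicalSpace X] (hopen : ∀ a, IsOpen (V a)) {s : St}
    (hs : StInv s) : IsOpen (stSet V s) := by
  cases s with
  | single b k => exact hopen b
  | union b c k =>
    exact isOpen_diff V hcov hdis hopen (c.length - b.length - 1) b c hs.1
      (by have := hs.2; omega)


-- task computations
lemma task_step_single {b : List ℕ} {k : ℕ} (i : ℕ) :
    (stepSt pick (.single b k) i).task = k + 1 := by
  simp only [stepSt]
  split_ifs <;> rfl

lemma step_union_cases {b c : List ℕ} {k : ℕ} (hs : StInv (St.union b c k)) (i : ℕ) :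
    (∃ b', stepSt pick (.union b c k) i = .single b' k) ∨
    (∃ b', stepSt pick (.union b c k) i = .union b' c k ∧
      c.length - b'.length < c.length - b.length) := by
  obtain ⟨hpre, hlen⟩ := hs
  by_cases hb : b.length + 1 = c.length
  · exact Or.inl ⟨b ++ [skipIdx (c.getD b.length 0) i], by simp only [stepSt, if_pos hb]⟩
  · by_cases hi : i = 0
    · refine Or.inr ⟨b ++ [c.getD b.length 0], by simp only [stepSt, if_neg hb, if_pos hi], ?_⟩
      simp only [List.length_append, List.length_singleton]
      omega
    · exact Or.inl ⟨b ++ [skipIdx (c.getD b.length 0) (i - 1)],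
        by simp only [stepSt, if_neg hb, if_neg hi]⟩

include hpick in
lemma va_step_prefix {s : St} (hs : StInv s) (i : ℕ) :
    s.va <+: (stepSt pick s i).va := by
  cases s with
  | single b k =>
    by_cases hc : pick b k = b
    · simp only [stepSt, if_pos hc, St.va]; exact ⟨_, rfl⟩
    · by_cases hi : i = 0
      · simp only [stepSt, if_neg hc, if_pos hi, St.va]
        exact List.prefix_refl _
      · simp only [stepSt, if_neg hc, if_neg hi, St.va]
        exact (hpick b k).trans ⟨_, rfl⟩
  | union b c k =>
    by_cases hb : b.length + 1 = c.length
    · simp only [stepSt, if_pos hb, St.va]; exact ⟨_, rfl⟩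
    · by_cases hi : i = 0
      · simp only [stepSt, if_neg hb, if_pos hi, St.va]; exact ⟨_, rfl⟩
      · simp only [stepSt, if_neg hb, if_neg hi, St.va]; exact ⟨_, rfl⟩

lemma va_sub {s : St} : stSet V s ⊆ V s.va := by
  cases s with
  | single b k => exact subset_rfl
  | union b c k => exact diff_subset

lemma va_len_union_step {b c : List ℕ} {k : ℕ} (i : ℕ) :
    (stepSt pick (.union b c k) i).va.length = b.length + 1 := by
  by_cases hb : b.length + 1 = c.length
  · simp [stepSt, if_pos hb, St.va]
  · by_cases hi : i = 0
    · simp [stepSt, if_neg hb, if_pos hi, St.va]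
    · simp [stepSt, if_neg hb, if_neg hi, St.va]

include hpick in
lemma va_len_two_step {s : St} (hs : StInv s) (i j : ℕ) :
    s.va.length + 1 ≤ (stepSt pick (stepSt pick s i) j).va.length := by
  have hstep2 := (va_step_prefix pick hpick (StInv_step pick hpick hs i) j).length_le
  cases s with
  | single b k =>
    have e1 : (St.single b k).va.length = b.length := rfl
    by_cases hc : pick b k = b
    · have h1 : stepSt pick (.single b k) i = .single (b ++ [i]) (k+1) := by
        simp [stepSt, if_pos hc]
      rw [h1] at hstep2
      have e2 : (St.single (b ++ [i]) (k+1)).va.length = b.length + 1 := by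
        simp [St.va]
      rw [h1]
      omega
    · by_cases hi : i = 0
      · have h1 : stepSt pick (.single b k) i = .union b (pick b k) (k+1) := by
          simp [stepSt, if_neg hc, if_pos hi]
        rw [h1]
        have e2 := va_len_union_step pick (b := b) (c := pick b k) (k := k+1) j
        omega
      · have h1 : stepSt pick (.single b k) i = .single (pick b k ++ [i-1]) (k+1) := by
          simp [stepSt, if_neg hc, if_neg hi]
        rw [h1] at hstep2
        have e2 : (St.single (pick b k ++ [i-1]) (k+1)).va.length = (pick b k).length + 1 := by
          simp [St.va]
        have hbp := (hpick b k).length_le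
        rw [h1]
        omega
  | union b c k =>
    have e1 : (St.union b c k).va.length = b.length := rfl
    have e2 := va_len_union_step pick (b := b) (c := c) (k := k) i
    omega

section Seq
variable (σ : ℕ → St) (hσ0 : σ 0 = .single [] 0)
variable (hσs : ∀ n, ∃ i, σ (n+1) = stepSt pick (σ n) i)

include hpick hσ0 hσs in
lemma StInv_seq : ∀ n, StInv (σ n) := by
  intro n
  induction n with
  | zero => rw [hσ0]; trivial
  | succ n ih =>
    obtain ⟨i, hi⟩ := hσs n
    rw [hi]
    exact StInv_step pick hpick ih i

include hpick hcov hdis hσs in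
lemma stSet_seq_mono {n m : ℕ} (hnm : n ≤ m) (hinv : ∀ n, StInv (σ n)) :
    stSet V (σ m) ⊆ stSet V (σ n) := by
  induction m, hnm using Nat.le_induction with
  | base => exact subset_rfl
  | succ m hm ih =>
    obtain ⟨i, hi⟩ := hσs m
    rw [hi]
    exact (stSet_step_subset V pick hpick hcov hdis (hinv m) i).trans ih

include hpick hσs in
lemma exists_single_ge (hinv : ∀ n, StInv (σ n)) :
    ∀ (r n : ℕ), (σ n).rank ≤ r → ∃ m, n ≤ m ∧ ∃ b, σ m = .single b (σ n).task := by
  intro r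
  induction r with
  | zero =>
    intro n hr
    cases hsn : σ n with
    | single b k => exact ⟨n, le_refl n, b, by rw [hsn]; rfl⟩
    | union b c k =>
      have := (hinv n)
      rw [hsn] at this hr
      obtain ⟨_, hlen⟩ := this
      simp only [St.rank] at hr
      omega
  | succ r ih =>
    intro n hr
    cases hsn : σ n with
    | single b k => exact ⟨n, le_refl n, b, by rw [hsn]; rfl⟩
    | union b c k =>
      obtain ⟨i, hi⟩ := hσs n
      rw [hsn] at hi
      rcases step_union_cases pick (by rw [← hsn]; exact hinv n) i with ⟨b', hb'⟩ | ⟨b', hb', hrk⟩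
      · refine ⟨n + 1, by omega, b', ?_⟩
        rw [hi, hb']
        rfl
      · have hrank : (σ (n+1)).rank ≤ r := by
          rw [hi, hb']
          simp only [St.rank]
          rw [hsn] at hr
          simp only [St.rank] at hr
          omega
        obtain ⟨m, hm, b'', hb''⟩ := ih (n+1) hrank
        refine ⟨m, by omega, b'', ?_⟩
        rw [hb'', hi, hb']
        rfl

include hpick hσ0 hσs in
lemma exists_single_task (hinv : ∀ n, StInv (σ n)) (k : ℕ) :
    ∃ n b, σ n = .single b k := by
  induction k with
  | zero =>
    obtain ⟨m, _, b, hb⟩ := exists_single_ge pick hpick σ hσs hinv (σ 0).rank 0 le_rfl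
    rw [hσ0] at hb
    exact ⟨m, b, hb⟩
  | succ k ih =>
    obtain ⟨n, b, hb⟩ := ih
    obtain ⟨i, hi⟩ := hσs n
    have htask : (σ (n+1)).task = k + 1 := by
      rw [hi, hb]
      exact task_step_single pick i
    obtain ⟨m, _, b', hb'⟩ := exists_single_ge pick hpick σ hσs hinv (σ (n+1)).rank (n+1) le_rfl
    rw [htask] at hb'
    exact ⟨m, b', hb'⟩

include hpick hσ0 hσs in
lemma va_seq_prefix {n m : ℕ} (hnm : n ≤ m) : (σ n).va <+: (σ m).va := by
  induction m, hnm using Nat.le_induction with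
  | base => exact List.prefix_refl _
  | succ m hm ih =>
    obtain ⟨i, hi⟩ := hσs m
    rw [hi]
    exact ih.trans (va_step_prefix pick hpick (StInv_seq pick hpick σ hσ0 hσs m) i)

include hpick hσ0 hσs in
lemma va_seq_len : ∀ m : ℕ, m ≤ (σ (2 * m)).va.length := by
  intro m
  induction m with
  | zero => omega
  | succ m ih =>
    obtain ⟨i, hi⟩ := hσs (2 * m)
    obtain ⟨j, hj⟩ := hσs (2 * m + 1)
    have h2 : 2 * (m + 1) = 2 * m + 1 + 1 := by omega
    rw [h2, hj, hi]
    have := va_len_two_step pick hpick (StInv_seq pick hpick σ hσ0 hσs (2 * m)) i j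
    omega

end Seq

lemma restrictSeq_getElem (p : ℕ → ℕ) (n i : ℕ) (h : i < (restrictSeq p n).length) :
    (restrictSeq p n)[i] = p i := by
  simp [restrictSeq]

include hpick hcov hdis in
lemma strict_scheme (hstr : StrictBranches V) (p : ℕ → ℕ) :
    ∃ x : X, (⋂ n : ℕ, stSet V (stateSt pick (restrictSeq p n))) = {x} := by
  set σ : ℕ → St := fun n => stateSt pick (restrictSeq p n) with hσ
  have hσ0 : σ 0 = .single [] 0 := by simp [hσ, restrictSeq, stateSt]
  have hσs : ∀ n, ∃ i, σ (n+1) = stepSt pick (σ n) i := by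
    intro n
    refine ⟨p n, ?_⟩
    show stateSt pick (restrictSeq p (n+1)) = _
    rw [restrictSeq_succ, stateSt_append]
  have hinv := StInv_seq pick hpick σ hσ0 hσs
  have hlen : ∀ m, m ≤ (σ (2*m)).va.length := va_seq_len pick hpick σ hσ0 hσs
  have hchain : ∀ {n m : ℕ}, n ≤ m → (σ n).va <+: (σ m).va := fun {n m} h =>
    va_seq_prefix pick hpick σ hσ0 hσs h
  set p' : ℕ → ℕ := fun j => ((σ (2*(j+1))).va).getD j 0 with hp'
  have key1eq : ∀ j, restrictSeq p' j = ((σ (2*(j+1))).va).take j := by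
    intro j
    have hlj : j + 1 ≤ (σ (2*(j+1))).va.length := hlen (j+1)
    apply List.ext_getElem
    · rw [restrictSeq_length, List.length_take]
      omega
    · intro i h1 h2
      rw [restrictSeq_getElem, List.getElem_take]
      have hii : i < j := by rwa [restrictSeq_length] at h1
      have hprefix : (σ (2*(i+1))).va <+: (σ (2*(j+1))).va := hchain (by omega)
      have hil : i < (σ (2*(i+1))).va.length := by have := hlen (i+1); omega
      show p' i = _
      rw [hp']
      simp only
      rw [← getD_of_prefix hprefix hil, List.getD_eq_getElem _ _ (by omega)]
  have key1 : ∀ j, restrictSeq p' j <+: (σ (2*(j+1))).va := by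
    intro j
    rw [key1eq j]
    exact List.take_prefix _ _
  have key2 : ∀ m, ∃ j, (σ m).va <+: restrictSeq p' j := by
    intro m
    refine ⟨m + (σ m).va.length, ?_⟩
    rw [key1eq]
    exact prefix_take_of_prefix (hchain (by omega)) (by omega)
  obtain ⟨x, hx⟩ := hstr p'
  refine ⟨x, Subset.antisymm ?_ ?_⟩
  · intro y hy
    have hyv : ∀ n, y ∈ V ((σ n).va) := fun n => va_sub V (mem_iInter.1 hy n)
    have hmem : y ∈ fruit V p' := mem_iInter.2 fun j =>
      mono_of_prefix V hcov (key1 j) (hyv (2*(j+1)))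
    rw [hx] at hmem
    exact hmem
  · intro y hy
    rw [mem_singleton_iff] at hy
    rw [hy]
    apply mem_iInter.2
    intro n
    obtain ⟨m, hnm, b, hb⟩ := exists_single_ge pick hpick σ hσs hinv ((σ n).rank) n le_rfl
    have hxm : x ∈ V ((σ m).va) := by
      obtain ⟨j, hj⟩ := key2 m
      have hxf : x ∈ fruit V p' := by rw [hx]; exact rfl
      exact mono_of_prefix V hcov hj (mem_iInter.1 hxf j)
    have heq : stSet V (σ m) = V ((σ m).va) := by rw [hb]; rfl
    exact stSet_seq_mono V pick hpick hcov hdis σ hσs hnm hinv (heq ▸ hxm)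

end Step

noncomputable def nxtIdx {X : Type} (V : List ℕ → Set X) (pick : List ℕ → ℕ → List ℕ)
    (x : X) (a : List ℕ) : ℕ :=
  @dite _ (∃ i, x ∈ stSet V (stateSt pick (a ++ [i]))) (Classical.dec _)
    (fun hh => hh.choose) (fun _ => 0)

lemma nxtIdx_spec {X : Type} (V : List ℕ → Set X) (pick : List ℕ → ℕ → List ℕ)
    (x : X) (a : List ℕ) (hh : ∃ i, x ∈ stSet V (stateSt pick (a ++ [i]))) :
    x ∈ stSet V (stateSt pick (a ++ [nxtIdx V pick x a])) := by
  rw [nxtIdx, dif_pos hh]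
  exact hh.choose_spec

noncomputable def branchList {X : Type} (V : List ℕ → Set X)
    (pick : List ℕ → ℕ → List ℕ) (x : X) : ℕ → List ℕ
  | 0 => []
  | n + 1 => branchList V pick x n ++ [nxtIdx V pick x (branchList V pick x n)]

theorem statement4' {X : Type} [TopologicalSpace X] [SecondCountableTopology X]
    (h : IsPiSpace X) :
    ∃ V : List ℕ → Set X, IsLusinPiBase V := by
  classical
  obtain ⟨V, hopen, ⟨⟨hroot, hcov⟩, hdis⟩, hstr, hbase⟩ := h
  have hne : ∀ a, (V a).Nonempty := fun a => (hbase.1 (V a) ⟨a, rfl⟩).2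
  -- countable basis
  set C := TopologicalSpace.countableBasis X with hC
  have hCb : TopologicalSpace.IsTopologicalBasis C :=
    TopologicalSpace.isBasis_countableBasis X
  have hCc : (insert (∅ : Set X) C).Countable :=
    (TopologicalSpace.countable_countableBasis X).insert ∅
  obtain ⟨B, hB⟩ := hCc.exists_eq_range ⟨∅, mem_insert _ _⟩
  have hBopen : ∀ k, IsOpen (B k) := by
    intro k
    have hmem : B k ∈ insert (∅ : Set X) C := by rw [hB]; exact mem_range_self k
    rcases mem_insert_iff.1 hmem with h1 | h1
    · rw [h1]; exact isOpen_empty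
    · exact hCb.isOpen h1
  have hBbase : ∀ (x : X) (U : Set X), IsOpen U → x ∈ U → ∃ k, x ∈ B k ∧ B k ⊆ U := by
    intro x U hU hx
    obtain ⟨G, hG, hxG, hGU⟩ := hCb.exists_subset_of_mem_open hx hU
    have hmem : G ∈ insert (∅ : Set X) C := mem_insert_of_mem _ hG
    rw [hB] at hmem
    obtain ⟨k, hk⟩ := hmem
    exact ⟨k, by rw [hk]; exact hxG, by rw [hk]; exact hGU⟩
  -- the pick function
  have hpinet : ∀ (b : List ℕ) (k : ℕ), (B k ∩ V b).Nonempty →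
      ∃ c, b <+: c ∧ V c ⊆ B k ∩ V b := fun b k hh =>
    pinet_of_pibase V hcov hdis hne hopen hbase.2 (hBopen k) hh
  set pick : List ℕ → ℕ → List ℕ := fun b k =>
    if hh : (B k ∩ V b).Nonempty then (hpinet b k hh).choose else b with hpickdef
  have hpick : ∀ b k, b <+: pick b k := by
    intro b k
    rw [hpickdef]
    by_cases hh : (B k ∩ V b).Nonempty
    · simp only [dif_pos hh]
      exact (hpinet b k hh).choose_spec.1
    · simp only [dif_neg hh]
      exact List.prefix_refl b
  have hpick2 : ∀ b k, (B k ∩ V b).Nonempty → V (pick b k) ⊆ B k ∩ V b := by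
    intro b k hh
    rw [hpickdef]
    simp only [dif_pos hh]
    exact (hpinet b k hh).choose_spec.2
  have hinvAll : ∀ a, StInv (stateSt pick a) := by
    intro a
    induction a using List.reverseRecOn with
    | nil => trivial
    | append_singleton a i ih =>
      rw [stateSt_append]
      exact StInv_step pick hpick ih i
  refine ⟨fun a => stSet V (stateSt pick a), ?_, ⟨⟨?_, ?_⟩, ?_⟩, ?_, ?_⟩
  · -- open
    intro a
    exact isOpen_stSet V hcov hdis hopen (hinvAll a)
  · -- root
    show stSet V (stateSt pick []) = univ
    exact hroot
  · -- cover
    intro a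
    simp only [stateSt_append]
    exact stSet_cover V pick hpick hcov hdis (hinvAll a)
  · -- disjoint
    intro a n m hnm
    simp only [stateSt_append]
    exact stSet_disj V pick hpick hcov hdis (hinvAll a) hnm
  · -- strict branches
    intro p
    exact strict_scheme V pick hpick hcov hdis hstr p
  · -- Lusin condition
    intro x U hU hxU
    obtain ⟨k, hxk, hkU⟩ := hBbase x U hU hxU
    set L : ℕ → List ℕ := branchList V pick x with hL
    have hxL : ∀ n, x ∈ stSet V (stateSt pick (L n)) := by
      intro n
      induction n with
      | zero =>
        show x ∈ stSet V (stateSt pick [])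
        show x ∈ V []
        rw [hroot]; exact mem_univ x
      | succ n ih =>
        have hex : ∃ i, x ∈ stSet V (stateSt pick (L n ++ [i])) := by
          have hc := stSet_cover V pick hpick hcov hdis (hinvAll (L n))
          rw [hc] at ih
          obtain ⟨i, hi⟩ := mem_iUnion.1 ih
          exact ⟨i, by rw [stateSt_append]; exact hi⟩
        have := nxtIdx_spec V pick x (L n) hex
        exact this
    set σ : ℕ → St := fun n => stateSt pick (L n) with hσ
    have hσ0 : σ 0 = .single [] 0 := rfl
    have hσs : ∀ n, ∃ i, σ (n+1) = stepSt pick (σ n) i := by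
      intro n
      refine ⟨nxtIdx V pick x (L n), ?_⟩
      show stateSt pick (L (n+1)) = _
      rw [hL]
      show stateSt pick (branchList V pick x n ++ [_]) = _
      rw [stateSt_append]
    have hinv : ∀ n, StInv (σ n) := fun n => hinvAll (L n)
    obtain ⟨n, b, hb⟩ := exists_single_task pick hpick σ hσ0 hσs hinv k
    have hxa : x ∈ V b := by
      have := hxL n
      rw [show stateSt pick (L n) = σ n from rfl, hb] at this
      exact this
    have hBk : (B k ∩ V b).Nonempty := ⟨x, hxk, hxa⟩
    have hsub := hpick2 b k hBk
    by_cases hcb : pick b k = b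
    · refine ⟨L n, 0, ?_, ?_⟩
      · show x ∈ stSet V (stateSt pick (L n))
        exact hxL n
      · intro y hy
        simp only [mem_iUnion] at hy
        obtain ⟨i, _, hyi⟩ := hy
        have hyy : y ∈ V (b ++ [i]) := by
          rw [stateSt_append, show stateSt pick (L n) = σ n from rfl, hb] at hyi
          simpa only [stepSt, if_pos hcb, stSet] using hyi
        have hyb : y ∈ V b := mono_of_prefix V hcov ⟨_, rfl⟩ hyy
        have hyp : y ∈ V (pick b k) := by rw [hcb]; exact hyb
        exact hkU ((hsub hyp).1)
    · refine ⟨L n, 1, ?_, ?_⟩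
      · show x ∈ stSet V (stateSt pick (L n))
        exact hxL n
      · intro y hy
        simp only [mem_iUnion] at hy
        obtain ⟨i, hi1, hyi⟩ := hy
        rw [stateSt_append, show stateSt pick (L n) = σ n from rfl, hb] at hyi
        have hi0 : i ≠ 0 := by omega
        simp only [stepSt, if_neg hcb, if_neg hi0, stSet] at hyi
        exact hkU ((hsub (mono_of_prefix V hcov ⟨_, rfl⟩ hyi)).1)


/-- Every second-countable π-space has a Lusin π-base. -/
theorem statement4 {X : Type} [TopologicalSpace X] [SecondCountableTopology X]
    (h : IsPiSpace X) :
    ∃ V : List ℕ → Set X, IsLusinPiBase V := statement4' h
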